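/- Let V be a finite abelian group and let σ and τ be automorphisms of V satisfying: σ³ = id, σ(v) ≠ v for every v ≠ 0, and τ ∘ σ = σ² ∘ τ. Then 3 · |{v ∈ V : τ(v) = v}| ≤ |V| + 2. -/
import Mathlib


/-- Lemma 4.4(ii), abstractly: if `σ` has order dividing 3 with only `0` as fixed
point, and `τσ = σ²τ`, then `3 · |Fix(τ)| ≤ |V| + 2`. -/
theorem three_mul_card_fixed_le {V : Type*} [AddCommGroup V] [Finite V]
    (σ τ : V ≃+ V) (hσ : ∀ v, σ (σ (σ v)) = v)
    (hfix : ∀ v : V, v ≠ 0 → σ v ≠ v)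
    (hcomm : ∀ v, τ (σ v) = σ (σ (τ v))) :
    3 * Nat.card {v : V // τ v = v} ≤ Nat.card V + 2 := by
  classical
  cases nonempty_fintype V
  have hσ0 : σ (0 : V) = 0 := map_zero σ
  have hne0 : ∀ v : V, v ≠ 0 → σ v ≠ 0 := by
    intro v hv h
    exact hv (σ.injective (h.trans hσ0.symm))
  have hτσ2 : ∀ v, τ (σ (σ v)) = σ (τ v) := by
    intro v
    rw [hcomm (σ v), hcomm v]
    exact hσ (σ (τ v))
  -- at most one fixed point per orbit
  have key1 : ∀ v : V, τ v = v → v ≠ 0 → τ (σ v) ≠ σ v := by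
    intro v hv hv0 h
    rw [hcomm, hv] at h
    exact hfix v hv0 (σ.injective h)
  have key2 : ∀ v : V, τ v = v → v ≠ 0 → τ (σ (σ v)) ≠ σ (σ v) := by
    intro v hv hv0 h
    rw [hτσ2, hv] at h
    exact hfix v hv0 (σ.injective h.symm)
  set F : Finset V := Finset.univ.filter (fun v => τ v = v ∧ v ≠ 0) with hF
  have hmemF : ∀ v : V, v ∈ F ↔ τ v = v ∧ v ≠ 0 := by
    intro v; simp [hF]
  set orb : V → Finset V := fun v => {v, σ v, σ (σ v)} with horb
  have hcard3 : ∀ v ∈ F, (orb v).card = 3 := by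
    intro v hv
    rw [hmemF] at hv
    obtain ⟨hvfix, hv0⟩ := hv
    have h1 : σ v ≠ v := hfix v hv0
    have hσv0 : σ v ≠ 0 := hne0 v hv0
    have h3 : σ (σ v) ≠ σ v := hfix (σ v) hσv0
    have h2 : σ (σ v) ≠ v := by
      intro h
      have : σ (σ (σ v)) = σ v := congrArg σ h
      rw [hσ] at this
      exact h1 this.symm
    have m1 : v ∉ ({σ v, σ (σ v)} : Finset V) := by
      simp only [Finset.mem_insert, Finset.mem_singleton]
      push_neg
      exact ⟨fun h => h1 h.symm, fun h => h2 h.symm⟩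
    have m2 : σ v ∉ ({σ (σ v)} : Finset V) := by
      simp only [Finset.mem_singleton]
      exact fun h => h3 h.symm
    simp only [horb]
    rw [Finset.card_insert_of_notMem m1, Finset.card_insert_of_notMem m2,
      Finset.card_singleton]
  -- distinct fixed points have disjoint orbits
  have same_orbit : ∀ v : V, τ v = v → v ≠ 0 → ∀ w : V, τ w = w →
      (w = σ v ∨ w = σ (σ v)) → False := by
    intro v hv hv0 w hw h
    rcases h with h | h
    · exact key1 v hv hv0 (h ▸ hw)
    · exact key2 v hv hv0 (h ▸ hw)
  have hdisj : ∀ v ∈ F, ∀ w ∈ F, v ≠ w → Disjoint (orb v) (orb w) := by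
    intro v hv w hw hvw
    rw [hmemF] at hv hw
    obtain ⟨hvfix, hv0⟩ := hv
    obtain ⟨hwfix, hw0⟩ := hw
    rw [Finset.disjoint_left]
    intro x hxv hxw
    simp only [horb, Finset.mem_insert, Finset.mem_singleton] at hxv hxw
    have inj := σ.injective
    rcases hxv with rfl | rfl | rfl <;> rcases hxw with h | h | h
    · exact hvw h
    · exact same_orbit w hwfix hw0 x hvfix (Or.inl h)
    · exact same_orbit w hwfix hw0 x hvfix (Or.inr h)
    · exact same_orbit v hvfix hv0 w hwfix (Or.inl h.symm)
    · exact hvw (inj h)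
    · exact same_orbit w hwfix hw0 v hvfix (Or.inl (inj h))
    · exact same_orbit v hvfix hv0 w hwfix (Or.inr h.symm)
    · exact same_orbit v hvfix hv0 w hwfix (Or.inl (inj h).symm)
    · exact hvw (inj (inj h))
  have hbU : (F.biUnion orb).card = 3 * F.card := by
    rw [Finset.card_biUnion hdisj]
    rw [Finset.sum_congr rfl hcard3, Finset.sum_const, smul_eq_mul, Nat.mul_comm]
  -- orbit elements are nonzero
  have h0notin : (0 : V) ∉ F.biUnion orb := by
    simp only [Finset.mem_biUnion, not_exists]
    rintro v ⟨hv, h⟩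
    rw [hmemF] at hv
    obtain ⟨-, hv0⟩ := hv
    simp only [horb, Finset.mem_insert, Finset.mem_singleton] at h
    rcases h with h | h | h
    · exact hv0 h.symm
    · exact hne0 v hv0 h.symm
    · exact hne0 (σ v) (hne0 v hv0) h.symm
  have hbig : 3 * F.card + 1 ≤ Fintype.card V := by
    have := Finset.card_le_univ (insert (0 : V) (F.biUnion orb))
    rwa [Finset.card_insert_of_notMem h0notin, hbU] at this
  -- relate Fix(τ) to F
  have hfixcard : Nat.card {v : V // τ v = v} = F.card + 1 := by
    rw [Nat.card_eq_fintype_card, Fintype.card_subtype]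
    have : Finset.univ.filter (fun v : V => τ v = v)
        = insert (0 : V) F := by
      ext v
      simp only [Finset.mem_filter, Finset.mem_univ, true_and, Finset.mem_insert, hmemF]
      constructor
      · intro h
        by_cases hv : v = 0
        · exact Or.inl hv
        · exact Or.inr ⟨h, hv⟩
      · rintro (rfl | ⟨h, -⟩)
        · exact map_zero τ
        · exact h
    rw [this, Finset.card_insert_of_notMem (by simp [hmemF])]
  rw [hfixcard]
  have : Nat.card V = Fintype.card V := Nat.card_eq_fintype_card
  omega
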